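/- Let α₁₁, α₁₂, α₂₁, α₂₂ ≥ 0 be reals and h₁₁, h₁₂, h₂₁, h₂₂ ∈ (1, 2]. For P > 1 define (logarithms base 2) V(P) = (1/2)·log(1 + P^{max(α₁₁−α₂₁,0)}/|h₂₁|²) + (1/2)·log(1 + P^{max(α₂₂−α₁₂,0)}/|h₁₂|²) + (1/2)·log(1 + P^{α₁₁}·|h₁₁|² + P^{α₁₂}·|h₁₂|²) + log 9 and W(P) = (1/2)·log(1 + P^{max(α₂₂−α₁₂,0)}/|h₁₂|²) + (1/2)·log(1 + P^{max(α₁₁−α₂₁,0)}/|h₁₂|²) + (1/2)·log(1 + P^{α₂₂}·|h₂₂|² + P^{α₂₁}·|h₂₁|²) + log 9. Then (V(P) + W(P)) / ((1/2)·log P) converges to max(α₁₁, α₁₂) + max(α₂₂, α₂₁) + 2·max(α₁₁ − α₂₁, 0) + 2·max(α₂₂ − α₁₂, 0) as P → ∞. -/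
import Mathlib

open Real Filter

private lemma logbP_atTop : Tendsto (fun P : ℝ => Real.logb 2 P) atTop atTop :=
  Real.tendsto_logb_atTop (by norm_num)

private lemma aux_tendsto (a K1 K2 : ℝ) (hK1 : 0 < K1) (g : ℝ → ℝ)
    (h : ∀ᶠ P in atTop, K1 * P ^ a ≤ g P ∧ g P ≤ K2 * P ^ a) :
    Tendsto (fun P : ℝ => Real.logb 2 (g P) / Real.logb 2 P) atTop (nhds a) := by
  have hP1 : ∀ᶠ P : ℝ in atTop, 1 < P := eventually_gt_atTop 1
  have hzero : Tendsto (fun P : ℝ => Real.logb 2 (g P / P ^ a) / Real.logb 2 P)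
      atTop (nhds 0) := by
    apply tendsto_of_tendsto_of_tendsto_of_le_of_le'
      (g := fun P : ℝ => Real.logb 2 K1 / Real.logb 2 P)
      (h := fun P : ℝ => Real.logb 2 K2 / Real.logb 2 P)
    · exact tendsto_const_nhds.div_atTop logbP_atTop
    · exact tendsto_const_nhds.div_atTop logbP_atTop
    · filter_upwards [h, hP1] with P hg hP
      have hPpos : (0:ℝ) < P ^ a := Real.rpow_pos_of_pos (by linarith) a
      have h1 : K1 ≤ g P / P ^ a := (le_div_iff₀ hPpos).mpr (by linarith [hg.1])
      have hlogP : 0 < Real.logb 2 P := Real.logb_pos (by norm_num) hP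
      have := Real.logb_le_logb_of_le (by norm_num : (1:ℝ) < 2) hK1 h1
      gcongr
    · filter_upwards [h, hP1] with P hg hP
      have hPpos : (0:ℝ) < P ^ a := Real.rpow_pos_of_pos (by linarith) a
      have h1 : K1 ≤ g P / P ^ a := (le_div_iff₀ hPpos).mpr (by linarith [hg.1])
      have h2 : g P / P ^ a ≤ K2 := (div_le_iff₀ hPpos).mpr (by linarith [hg.2])
      have hlogP : 0 < Real.logb 2 P := Real.logb_pos (by norm_num) hP
      have := Real.logb_le_logb_of_le (by norm_num : (1:ℝ) < 2)
        (lt_of_lt_of_le hK1 h1) h2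
      gcongr
  have key := (tendsto_const_nhds (x := a)).add hzero
  rw [add_zero] at key
  refine key.congr' ?_
  filter_upwards [h, hP1] with P hg hP
  have hPpos : (0:ℝ) < P ^ a := Real.rpow_pos_of_pos (by linarith) a
  have hgpos : 0 < g P := lt_of_lt_of_le (mul_pos hK1 hPpos) hg.1
  have hlogP : 0 < Real.logb 2 P := Real.logb_pos (by norm_num) hP
  have hlogpow : Real.logb 2 (P ^ a) = a * Real.logb 2 P := by
    rw [Real.logb, Real.logb, Real.log_rpow (by linarith)]; ring
  have hdiv : Real.logb 2 (g P / P ^ a) = Real.logb 2 (g P) - a * Real.logb 2 P := by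
    rw [Real.logb_div hgpos.ne' hPpos.ne', hlogpow]
  rw [hdiv, sub_div, mul_div_cancel_right₀ _ hlogP.ne']
  ring

private lemma single_term (b c : ℝ) (hb : 0 ≤ b) (hc : 0 < c) :
    Tendsto (fun P : ℝ => (1/2) * Real.logb 2 (1 + P ^ b / c) / ((1/2) * Real.logb 2 P))
      atTop (nhds b) := by
  have h := aux_tendsto b (1/c) (1 + 1/c) (by positivity)
      (fun P => 1 + P ^ b / c) ?_
  · refine h.congr fun P => ?_
    rw [mul_div_mul_left _ _ (by norm_num : (1:ℝ)/2 ≠ 0)]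
  · filter_upwards [eventually_ge_atTop (1:ℝ)] with P hP
    have hPb : (1:ℝ) ≤ P ^ b := Real.one_le_rpow hP hb
    have e1 : P ^ b / c = c⁻¹ * P ^ b := by rw [div_eq_mul_inv]; ring
    have e2 : (1:ℝ)/c * P ^ b = c⁻¹ * P ^ b := by rw [one_div]
    have e3 : (1 + 1/c) * P ^ b = P ^ b + c⁻¹ * P ^ b := by rw [one_div]; ring
    rw [e1, e2, e3]
    constructor <;> linarith

private lemma double_term (b₁ b₂ c₁ c₂ : ℝ) (hb₁ : 0 ≤ b₁) (hb₂ : 0 ≤ b₂)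
    (hc₁ : 0 < c₁) (hc₂ : 0 < c₂) :
    Tendsto (fun P : ℝ => (1/2) * Real.logb 2 (1 + P ^ b₁ * c₁ + P ^ b₂ * c₂)
        / ((1/2) * Real.logb 2 P)) atTop (nhds (max b₁ b₂)) := by
  have h := aux_tendsto (max b₁ b₂) (min c₁ c₂) (1 + c₁ + c₂) (lt_min hc₁ hc₂)
      (fun P => 1 + P ^ b₁ * c₁ + P ^ b₂ * c₂) ?_
  · refine h.congr fun P => ?_
    rw [mul_div_mul_left _ _ (by norm_num : (1:ℝ)/2 ≠ 0)]
  · filter_upwards [eventually_ge_atTop (1:ℝ)] with P hP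
    have hP0 : (0:ℝ) < P := by linarith
    have h1 : (0:ℝ) < P ^ b₁ := Real.rpow_pos_of_pos hP0 _
    have h2 : (0:ℝ) < P ^ b₂ := Real.rpow_pos_of_pos hP0 _
    have hm1 : P ^ b₁ ≤ P ^ (max b₁ b₂) :=
      Real.rpow_le_rpow_of_exponent_le hP (le_max_left _ _)
    have hm2 : P ^ b₂ ≤ P ^ (max b₁ b₂) :=
      Real.rpow_le_rpow_of_exponent_le hP (le_max_right _ _)
    have hmax1 : (1:ℝ) ≤ P ^ (max b₁ b₂) :=
      Real.one_le_rpow hP (le_trans hb₁ (le_max_left _ _))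
    constructor
    · rcases max_cases b₁ b₂ with ⟨heq, _⟩ | ⟨heq, _⟩
      · rw [heq]; nlinarith [min_le_left c₁ c₂]
      · rw [heq]; nlinarith [min_le_right c₁ c₂]
    · nlinarith

private lemma const_term : Tendsto (fun P : ℝ => Real.logb 2 9 / ((1/2) * Real.logb 2 P))
    atTop (nhds 0) :=
  tendsto_const_nhds.div_atTop (logbP_atTop.const_mul_atTop (by norm_num))

/-- The sum of the two `2R₁ + R₂`- and `2R₂ + R₁`-type upper bounds, normalized by
`(1/2)·log P`, converges to the corresponding GDoF expression as `P → ∞`. -/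
theorem weighted_bounds_sum_gdof
    (α₁₁ α₁₂ α₂₁ α₂₂ h₁₁ h₁₂ h₂₁ h₂₂ : ℝ)
    (hα₁₁ : 0 ≤ α₁₁) (hα₁₂ : 0 ≤ α₁₂) (hα₂₁ : 0 ≤ α₂₁) (hα₂₂ : 0 ≤ α₂₂)
    (hh₁₁ : h₁₁ ∈ Set.Ioc (1 : ℝ) 2) (hh₁₂ : h₁₂ ∈ Set.Ioc (1 : ℝ) 2)
    (hh₂₁ : h₂₁ ∈ Set.Ioc (1 : ℝ) 2) (hh₂₂ : h₂₂ ∈ Set.Ioc (1 : ℝ) 2) :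
    Tendsto (fun P : ℝ =>
        (((1 / 2) * Real.logb 2 (1 + P ^ (max (α₁₁ - α₂₁) 0) / |h₂₁| ^ 2)
            + (1 / 2) * Real.logb 2 (1 + P ^ (max (α₂₂ - α₁₂) 0) / |h₁₂| ^ 2)
            + (1 / 2) * Real.logb 2 (1 + P ^ α₁₁ * |h₁₁| ^ 2 + P ^ α₁₂ * |h₁₂| ^ 2)
            + Real.logb 2 9)
          + ((1 / 2) * Real.logb 2 (1 + P ^ (max (α₂₂ - α₁₂) 0) / |h₁₂| ^ 2)
              + (1 / 2) * Real.logb 2 (1 + P ^ (max (α₁₁ - α₂₁) 0) / |h₁₂| ^ 2)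
              + (1 / 2) * Real.logb 2 (1 + P ^ α₂₂ * |h₂₂| ^ 2 + P ^ α₂₁ * |h₂₁| ^ 2)
              + Real.logb 2 9))
          / ((1 / 2) * Real.logb 2 P))
      atTop (nhds
        (max α₁₁ α₁₂ + max α₂₂ α₂₁
          + 2 * max (α₁₁ - α₂₁) 0 + 2 * max (α₂₂ - α₁₂) 0)) := by
  have c11 : (0:ℝ) < |h₁₁| ^ 2 := by have := hh₁₁.1; positivity
  have c12 : (0:ℝ) < |h₁₂| ^ 2 := by have := hh₁₂.1; positivity
  have c21 : (0:ℝ) < |h₂₁| ^ 2 := by have := hh₂₁.1; positivity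
  have c22 : (0:ℝ) < |h₂₂| ^ 2 := by have := hh₂₂.1; positivity
  have t1 := single_term (max (α₁₁ - α₂₁) 0) _ (le_max_right _ _) c21
  have t2 := single_term (max (α₂₂ - α₁₂) 0) _ (le_max_right _ _) c12
  have t3 := double_term α₁₁ α₁₂ _ _ hα₁₁ hα₁₂ c11 c12
  have t5 := single_term (max (α₂₂ - α₁₂) 0) _ (le_max_right _ _) c12
  have t6 := single_term (max (α₁₁ - α₂₁) 0) _ (le_max_right _ _) c12
  have t7 := double_term α₂₂ α₂₁ _ _ hα₂₂ hα₂₁ c22 c21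
  have key := ((((((t1.add t2).add t3).add const_term).add t5).add t6).add t7).add const_term
  have heq : (max (α₁₁ - α₂₁) 0 + max (α₂₂ - α₁₂) 0 + max α₁₁ α₁₂ + 0 + max (α₂₂ - α₁₂) 0
      + max (α₁₁ - α₂₁) 0 + max α₂₂ α₂₁ + 0)
      = max α₁₁ α₁₂ + max α₂₂ α₂₁ + 2 * max (α₁₁ - α₂₁) 0 + 2 * max (α₂₂ - α₁₂) 0 := by ring
  rw [heq] at key
  refine key.congr fun P => ?_
  ring
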